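/- The function h(t) = 2t² + 2t + 1 − t⁴ − 4e^{t-1} on [0,1] is first negative then positive, with exactly one zero in (0,1). -/

import Mathlib

open Real Set

noncomputable def hh (t : ℝ) : ℝ := 2*t^2 + 2*t + 1 - t^4 - 4*Real.exp (t-1)
noncomputable def gg (t : ℝ) : ℝ := 4*t + 2 - 4*t^3 - 4*Real.exp (t-1)
noncomputable def gg2 (t : ℝ) : ℝ := 4 - 12*t^2 - 4*Real.exp (t-1)

lemma expd (t : ℝ) : HasDerivAt (fun t : ℝ => Real.exp (t-1)) (Real.exp (t-1)) t := by
  simpa using ((hasDerivAt_id t).sub_const 1).exp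

lemma hh_hasDeriv (t : ℝ) : HasDerivAt hh (gg t) t := by
  have h := (((((hasDerivAt_pow 2 t).const_mul 2).add ((hasDerivAt_id' t).const_mul 2)).add_const 1).sub
      (hasDerivAt_pow 4 t)).sub ((expd t).const_mul 4)
  refine h.congr_deriv ?_
  simp [gg]; ring

lemma gg_hasDeriv (t : ℝ) : HasDerivAt gg (gg2 t) t := by
  have h := ((((hasDerivAt_id' t).const_mul 4).add_const 2).sub
      ((hasDerivAt_pow 3 t).const_mul 4)).sub ((expd t).const_mul 4)
  refine h.congr_deriv ?_
  simp [gg2]; ring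

lemma gg2_hasDeriv (t : ℝ) : HasDerivAt gg2 (-24*t - 4*Real.exp (t-1)) t := by
  have h := ((hasDerivAt_const t (4:ℝ)).sub ((hasDerivAt_pow 2 t).const_mul 12)).sub
      ((expd t).const_mul 4)
  refine h.congr_deriv ?_
  ring

lemma exp_neg_one_bounds : Real.exp (0 - 1 : ℝ) < 1/2 ∧ (1/4 : ℝ) < Real.exp (0 - 1 : ℝ) := by
  have h1 := Real.exp_one_gt_d9
  have h2 := Real.exp_one_lt_d9
  have h0 : (0:ℝ) < Real.exp 1 := Real.exp_pos 1
  have : Real.exp (0 - 1 : ℝ) = (Real.exp 1)⁻¹ := by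
    norm_num [Real.exp_neg]
  rw [this]
  constructor
  · rw [inv_lt_iff_one_lt_mul₀ h0]; nlinarith
  · rw [lt_inv_comm₀ (by norm_num) h0]; nlinarith

lemma gg0 : 0 < gg 0 := by
  have := exp_neg_one_bounds
  simp only [gg]
  norm_num
  nlinarith [this.1]

lemma hh0 : hh 0 < 0 := by
  have := exp_neg_one_bounds
  simp only [hh]
  norm_num
  nlinarith [this.2]

lemma gg1 : gg 1 = -2 := by norm_num [gg]

lemma hh1 : hh 1 = 0 := by simp [hh]; ring

lemma gg_cont : Continuous gg := by
  rw [continuous_iff_continuousAt]; exact fun t => (gg_hasDeriv t).continuousAt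

lemma hh_cont : Continuous hh := by
  rw [continuous_iff_continuousAt]; exact fun t => (hh_hasDeriv t).continuousAt

lemma gg_concave : StrictConcaveOn ℝ (Icc (0:ℝ) 1) gg := by
  apply strictConcaveOn_of_deriv2_neg (convex_Icc 0 1) gg_cont.continuousOn
  intro x hx
  rw [interior_Icc] at hx
  have d1 : deriv gg = gg2 := funext fun t => (gg_hasDeriv t).deriv
  have : deriv (deriv gg) x = -24*x - 4*Real.exp (x-1) := by
    rw [d1]; exact (gg2_hasDeriv x).deriv
  simp only [Function.iterate_succ, Function.iterate_zero, Function.comp_apply, id_eq]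
  rw [this]
  nlinarith [Real.exp_pos (x-1), hx.1]

lemma gg_pos_left {m : ℝ} (hm : m ∈ Icc (0:ℝ) 1) (hgm : gg m = 0)
    {t : ℝ} (ht0 : 0 ≤ t) (htm : t < m) : 0 < gg t := by
  have hmpos : 0 < m := lt_of_le_of_lt ht0 htm
  have hcc := gg_concave.concaveOn
  have ha0 : (0:ℝ) ≤ 1 - t/m := by
    have : t/m < 1 := (div_lt_one hmpos).mpr htm; linarith
  have hb0 : (0:ℝ) ≤ t/m := by positivity
  have hab : (1 - t/m) + t/m = 1 := by ring
  have key := hcc.2 (left_mem_Icc.mpr (by norm_num) : (0:ℝ) ∈ Icc (0:ℝ) 1) hm ha0 hb0 hab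
  rw [smul_eq_mul, smul_eq_mul, smul_eq_mul, smul_eq_mul] at key
  have ht : (1 - t/m) * 0 + t/m * m = t := by field_simp; ring
  rw [ht, hgm] at key
  have ha : 0 < 1 - t/m := by
    have : t/m < 1 := (div_lt_one hmpos).mpr htm; linarith
  nlinarith [gg0]

lemma gg_neg_right {m : ℝ} (hm0 : 0 < m) (hgm : gg m = 0)
    {t : ℝ} (ht : t ∈ Icc (0:ℝ) 1) (hmt : m < t) : gg t < 0 := by
  have htpos : 0 < t := lt_trans hm0 hmt
  have hcc := gg_concave.concaveOn
  have ha0 : (0:ℝ) ≤ 1 - m/t := by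
    have : m/t < 1 := (div_lt_one htpos).mpr hmt; linarith
  have hb0 : (0:ℝ) ≤ m/t := by positivity
  have hab : (1 - m/t) + m/t = 1 := by ring
  have key := hcc.2 (left_mem_Icc.mpr (by norm_num) : (0:ℝ) ∈ Icc (0:ℝ) 1) ht ha0 hb0 hab
  rw [smul_eq_mul, smul_eq_mul, smul_eq_mul, smul_eq_mul] at key
  have hmm : (1 - m/t) * 0 + m/t * t = m := by field_simp; ring
  rw [hmm, hgm] at key
  have ha : 0 < 1 - m/t := by
    have : m/t < 1 := (div_lt_one htpos).mpr hmt; linarith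
  have hb : 0 < m/t := by positivity
  nlinarith [gg0]

lemma main_aux : ∃ z ∈ Ioo (0:ℝ) 1, (∀ t ∈ Ioo (0:ℝ) 1, t < z → hh t < 0) ∧
    (∀ t ∈ Ioo (0:ℝ) 1, z < t → 0 < hh t) ∧ hh z = 0 := by
  have h01 : (0:ℝ) ≤ 1 := by norm_num
  obtain ⟨m, hm, hgm⟩ : ∃ m ∈ Ioo (0:ℝ) 1, gg m = 0 := by
    have := intermediate_value_Ioo' h01 gg_cont.continuousOn
      (by rw [gg1]; exact ⟨by norm_num, gg0⟩ : (0:ℝ) ∈ Ioo (gg 1) (gg 0))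
    obtain ⟨m, hm, hgm⟩ := this
    exact ⟨m, hm, hgm⟩
  have hmIcc : m ∈ Icc (0:ℝ) 1 := ⟨hm.1.le, hm.2.le⟩
  have mono : StrictMonoOn hh (Icc 0 m) := by
    apply strictMonoOn_of_deriv_pos (convex_Icc 0 m) hh_cont.continuousOn
    intro x hx
    rw [interior_Icc] at hx
    rw [(hh_hasDeriv x).deriv]
    exact gg_pos_left hmIcc hgm hx.1.le hx.2
  have anti : StrictAntiOn hh (Icc m 1) := by
    apply strictAntiOn_of_deriv_neg (convex_Icc m 1) hh_cont.continuousOn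
    intro x hx
    rw [interior_Icc] at hx
    rw [(hh_hasDeriv x).deriv]
    exact gg_neg_right hm.1 hgm ⟨(hm.1.trans hx.1).le, hx.2.le⟩ hx.1
  have hhm : 0 < hh m := by
    have := anti ⟨le_refl m, hm.2.le⟩ ⟨hm.2.le.trans (le_refl 1), le_refl 1⟩ hm.2
    rw [hh1] at this; exact this
  obtain ⟨z, hz, hhz⟩ : ∃ z ∈ Ioo (0:ℝ) m, hh z = 0 := by
    have := intermediate_value_Ioo hm.1.le hh_cont.continuousOn
      (⟨hh0, hhm⟩ : (0:ℝ) ∈ Ioo (hh 0) (hh m))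
    obtain ⟨z, hz, hhz⟩ := this
    exact ⟨z, hz, hhz⟩
  refine ⟨z, ⟨hz.1, hz.2.trans hm.2⟩, ?_, ?_, hhz⟩
  · intro t ht htz
    have := mono ⟨ht.1.le, (htz.trans hz.2).le⟩ ⟨hz.1.le, hz.2.le⟩ htz
    rw [hhz] at this; exact this
  · intro t ht hzt
    rcases le_or_gt t m with h | h
    · have := mono ⟨hz.1.le, hz.2.le⟩ ⟨(hz.1.trans hzt).le, h⟩ hzt
      rw [hhz] at this; exact this
    · have := anti ⟨h.le, ht.2.le⟩ ⟨hm.2.le, le_refl 1⟩ ht.2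
      rw [hh1] at this; exact this

theorem stmt_14 :
    ∃ z ∈ Set.Ioo (0 : ℝ) 1,
      (∀ t ∈ Set.Ioo (0 : ℝ) 1, t < z →
        2 * t ^ 2 + 2 * t + 1 - t ^ 4 - 4 * Real.exp (t - 1) < 0) ∧
      (∀ t ∈ Set.Ioo (0 : ℝ) 1, z < t →
        0 < 2 * t ^ 2 + 2 * t + 1 - t ^ 4 - 4 * Real.exp (t - 1)) ∧
      2 * z ^ 2 + 2 * z + 1 - z ^ 4 - 4 * Real.exp (z - 1) = 0 ∧
      ∀ t ∈ Set.Ioo (0 : ℝ) 1,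
        2 * t ^ 2 + 2 * t + 1 - t ^ 4 - 4 * Real.exp (t - 1) = 0 → t = z := by
  obtain ⟨z, hz, hneg, hpos, hzero⟩ := main_aux
  refine ⟨z, hz, fun t ht htz => hneg t ht htz, fun t ht hzt => hpos t ht hzt, hzero, ?_⟩
  intro t ht h0
  rcases lt_trichotomy t z with h | h | h
  · exact absurd h0 (ne_of_lt (hneg t ht h))
  · exact h
  · exact absurd h0 (ne_of_gt (hpos t ht h))
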